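/- Let U be a countable set of vertices of a strongly connected directed graph D. Then for every vertex r of D there exist an in-arborescence and an out-arborescence in D, each rooted at r, that contain U and whose leaves are contained in U. -/

import Mathlib

/-!
Common definitions: directed graphs as vertex/edge sets, directed paths and
walks, rays, arborescences, tree-like models and butterfly minors, laced
paths, knit rays, and the shapes (dominated directed rays, stars, combs,
chains of triangles) from the paper.
-/

universe u

/-- A directed graph on an ambient vertex type `V`, given by a set of vertices
and a set of directed edges (ordered pairs of vertices). -/
structure DGraph (V : Type u) where
  verts : Set V
  edges : Set (V × V)

namespace DGraph

variable {V : Type u}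

instance : Union (DGraph V) := ⟨fun G H => ⟨G.verts ∪ H.verts, G.edges ∪ H.edges⟩⟩
instance : Inter (DGraph V) := ⟨fun G H => ⟨G.verts ∩ H.verts, G.edges ∩ H.edges⟩⟩
instance : HasSubset (DGraph V) := ⟨fun H G => H.verts ⊆ G.verts ∧ H.edges ⊆ G.edges⟩
instance : EmptyCollection (DGraph V) := ⟨⟨∅, ∅⟩⟩

/-- The union of a family of directed graphs. -/
def iUnion {ι : Type} (f : ι → DGraph V) : DGraph V :=
  ⟨⋃ i, (f i).verts, ⋃ i, (f i).edges⟩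

/-- The directed graph obtained by reversing the orientation of every edge. -/
def reverse (G : DGraph V) : DGraph V := ⟨G.verts, {e | (e.2, e.1) ∈ G.edges}⟩

/-- The directed graph consisting of a single vertex and no edges. -/
def single (v : V) : DGraph V := ⟨{v}, ∅⟩

/-- Two vertices joined by both directed edges. -/
def linkBoth (a b : V) : DGraph V := ⟨{a, b}, {(a, b), (b, a)}⟩

/-- A directed triangle (directed cycle of length 3) on `a, b, c`. -/
def triangle (a b c : V) : DGraph V := ⟨{a, b, c}, {(a, b), (b, c), (c, a)}⟩

/-- The directed graph of a list of vertices with its consecutive edges. -/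
def ofList (l : List V) : DGraph V := ⟨{v | v ∈ l}, {e | e ∈ l.zip l.tail}⟩

/-- `𝒟(P)` for the (undirected) path `P` given by the list `l`:
the double path on `l`. -/
def doubleOfList (l : List V) : DGraph V := ofList l ∪ (ofList l).reverse

/-- The directed cycle through the vertices of `l` in order. -/
def cycleOfList (l : List V) : DGraph V :=
  ⟨{v | v ∈ l}, {e | e ∈ l.zip (l.tail ++ l.take 1)}⟩

/-- `G` is a directed cycle. -/
def IsDirectedCycle (G : DGraph V) : Prop :=
  ∃ l : List V, l.Nodup ∧ 2 ≤ l.length ∧ G = cycleOfList l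

/-- The out-oriented ray with vertices `f 0, f 1, …`, rooted at `f 0`. -/
def outRay (f : ℕ → V) : DGraph V :=
  ⟨Set.range f, {e | ∃ n, e = (f n, f (n + 1))}⟩

/-- The in-oriented ray with vertices `f 0, f 1, …`, rooted at `f 0`. -/
def inRay (f : ℕ → V) : DGraph V :=
  ⟨Set.range f, {e | ∃ n, e = (f (n + 1), f n)}⟩

/-- `𝒟(R)` for the undirected ray `R` with vertices `f 0, f 1, …`. -/
def doubleRay (f : ℕ → V) : DGraph V := outRay f ∪ inRay f

/-- The dominated directed ray on an out-oriented ray: the out-oriented ray `f`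
rooted at `f 0` together with the edges `(f (n+1), f 0)`. -/
def domOutRay (f : ℕ → V) : DGraph V :=
  ⟨Set.range f, {e | ∃ n, e = (f n, f (n + 1))} ∪ {e | ∃ n, e = (f (n + 1), f 0)}⟩

/-- The dominated directed ray on an in-oriented ray: the in-oriented ray `f`
rooted at `f 0` together with the edges `(f 0, f (n+1))`. -/
def domInRay (f : ℕ → V) : DGraph V :=
  ⟨Set.range f, {e | ∃ n, e = (f (n + 1), f n)} ∪ {e | ∃ n, e = (f 0, f (n + 1))}⟩

/-- `G` is a dominated directed ray. -/
def IsDominatedDirectedRay (G : DGraph V) : Prop :=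
  ∃ f : ℕ → V, Function.Injective f ∧ (G = domOutRay f ∨ G = domInRay f)

/-- The internal vertices of a path or walk given as a list. -/
def internals (l : List V) : List V := l.tail.dropLast

/-- `l` is a directed path in `G`. -/
def IsPath (G : DGraph V) (l : List V) : Prop :=
  l ≠ [] ∧ l.Nodup ∧ (∀ v ∈ l, v ∈ G.verts) ∧ ∀ e ∈ l.zip l.tail, e ∈ G.edges

/-- `l` is a directed path in `G` with startvertex `a` and endvertex `b`. -/
def IsPathFrom (G : DGraph V) (a b : V) (l : List V) : Prop :=
  IsPath G l ∧ l.head? = some a ∧ l.getLast? = some b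

/-- There is a directed `a`–`b` path in `G`. -/
def Reaches (G : DGraph V) (a b : V) : Prop := ∃ l, IsPathFrom G a b l

/-- `G` is strongly connected. -/
def StronglyConnected (G : DGraph V) : Prop :=
  ∀ a ∈ G.verts, ∀ b ∈ G.verts, Reaches G a b

/-- `l` is a directed `X`–`Y` path in `G`: it starts in `X`, ends in `Y` and
has no internal vertex in `X ∪ Y`. -/
def IsXYPath (G : DGraph V) (X Y : Set V) (l : List V) : Prop :=
  IsPath G l ∧ (∃ a ∈ X, l.head? = some a) ∧ (∃ b ∈ Y, l.getLast? = some b) ∧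
    ∀ v ∈ internals l, v ∉ X ∪ Y

/-- `T` is an in-arborescence rooted at `r`: its underlying graph is a tree
and all edges are directed towards the root `r`. -/
def IsInArborescence (T : DGraph V) (r : V) : Prop :=
  r ∈ T.verts ∧ (∀ e ∈ T.edges, e.1 ∈ T.verts ∧ e.2 ∈ T.verts) ∧
  (∀ w, (r, w) ∉ T.edges) ∧ (∀ v ∈ T.verts, v ≠ r → ∃! w, (v, w) ∈ T.edges) ∧
  (∀ v ∈ T.verts, Reaches T v r)

/-- `T` is an out-arborescence rooted at `r`. -/
def IsOutArborescence (T : DGraph V) (r : V) : Prop := IsInArborescence T.reverse r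

/-- `v` is a leaf of the in-arborescence `T` rooted at `r`. -/
def IsLeafOfInArb (T : DGraph V) (r v : V) : Prop :=
  v ∈ T.verts ∧ v ≠ r ∧ ∀ u, (u, v) ∉ T.edges

/-- `v` is a leaf of the out-arborescence `T` rooted at `r`. -/
def IsLeafOfOutArb (T : DGraph V) (r v : V) : Prop := IsLeafOfInArb T.reverse r v

/-- A tree-like model of `H` in `D`; every vertex of `H` is identified with the
common root of the in- and out-arborescence of its branch set. -/
structure TreeLikeModel (D H : DGraph V) where
  bag : V → DGraph V
  tin : V → DGraph V
  tout : V → DGraph V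
  emap : V × V → V × V
  bag_sub : ∀ v ∈ H.verts, bag v ⊆ D
  bag_disjoint : ∀ v ∈ H.verts, ∀ w ∈ H.verts, v ≠ w → (bag v).verts ∩ (bag w).verts = ∅
  bag_eq : ∀ v ∈ H.verts, bag v = tin v ∪ tout v
  tin_arb : ∀ v ∈ H.verts, IsInArborescence (tin v) v
  tout_arb : ∀ v ∈ H.verts, IsOutArborescence (tout v) v
  roots_eq : ∀ v ∈ H.verts, (tin v).verts ∩ (tout v).verts = {v}
  emap_mem : ∀ e ∈ H.edges, emap e ∈ D.edges
  emap_tail : ∀ e ∈ H.edges, (emap e).1 ∈ (tout e.1).verts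
  emap_head : ∀ e ∈ H.edges, (emap e).2 ∈ (tin e.2).verts

/-- `H` is a butterfly minor of `D`. -/
def IsButterflyMinor (D H : DGraph V) : Prop := Nonempty (TreeLikeModel D H)

/-- `G` is a double path (`𝒟(P)` for an undirected path `P`) with endpoints
`a` and `b`. -/
def IsDoublePath (G : DGraph V) (a b : V) : Prop :=
  ∃ l : List V, l.Nodup ∧ l.head? = some a ∧ l.getLast? = some b ∧ G = doubleOfList l

/-- `G = 𝒟(S)` for a subdivided star `S` with infinitely many leaves, with
centre `c` and branches `q n`; `teeth` is the set of leaves of `S`. -/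
def IsDSubdividedStar (G : DGraph V) (teeth : Set V) : Prop :=
  ∃ (c : V) (q : ℕ → List V),
    (∀ n, (q n).Nodup ∧ (q n).head? = some c ∧ 2 ≤ (q n).length) ∧
    (∀ m n, m ≠ n → ∀ v, v ∈ q m → v ∈ q n → v = c) ∧
    G = iUnion (fun n => doubleOfList (q n)) ∧
    teeth = {v | ∃ n, (q n).getLast? = some v}

/-- `G` is obtained from `𝒟(S)` for a subdivided star `S` by replacing the
centre of infinite degree by a dominated directed ray. -/
def IsRayCentreStar (G : DGraph V) (teeth : Set V) : Prop :=
  ∃ (f : ℕ → V) (R : DGraph V) (g : ℕ → V) (q : ℕ → List V),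
    Function.Injective f ∧ (R = domOutRay f ∨ R = domInRay f) ∧
    (∀ n, (q n).Nodup ∧ (q n).head? = some (g n)) ∧
    (∀ n, ∀ v ∈ q n, v ∉ Set.range f) ∧
    (∀ m n, m ≠ n → ∀ v ∈ q m, v ∉ q n) ∧
    G = R ∪ iUnion (fun n => doubleOfList (q n) ∪ linkBoth (f n) (g n)) ∧
    teeth = {v | ∃ n, (q n).getLast? = some v}

/-- `G` is shaped by a star, with set of teeth `teeth`. -/
def IsShapedByStar (G : DGraph V) (teeth : Set V) : Prop :=
  (IsDominatedDirectedRay G ∧ teeth = G.verts) ∨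
  IsDSubdividedStar G teeth ∨ IsRayCentreStar G teeth

/-- `G = 𝒟(C)` for a comb `C` with spine `f`, branches `q n` attached at
`f (α n)`; `teeth` is the set of teeth of `C`. -/
def IsDComb (G : DGraph V) (teeth : Set V) : Prop :=
  ∃ (f : ℕ → V) (α : ℕ → ℕ) (q : ℕ → List V),
    Function.Injective f ∧ Function.Injective α ∧
    (∀ n, (q n).Nodup ∧ (q n).head? = some (f (α n))) ∧
    (∀ n, ∀ v ∈ (q n).tail, v ∉ Set.range f) ∧
    (∀ m n, m ≠ n → ∀ v ∈ q m, v ∉ q n) ∧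
    G = doubleRay f ∪ iUnion (fun n => doubleOfList (q n)) ∧
    teeth = {v | ∃ n, (q n).getLast? = some v}

/-- The double path on `l` together with both edges between `b` and the first
vertex of `l` (empty if `l` is empty). -/
def branchGraph (b : V) (l : List V) : DGraph V :=
  match l with
  | [] => ∅
  | h :: _ => doubleOfList l ∪ linkBoth b h

/-- `G` is obtained from `𝒟(C)` for a comb `C` by replacing each junction of
`C` by a directed cycle of length 3 as described in the paper.  Position `k`
of the spine is replaced by the piece `S k` (a single vertex, or a directed
triangle at junctions), with `L k`, `R k`, `B k` the vertices of `S k` to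
which the left spine part, the right spine part and the branch attach, and
`t n` the tooth of branch `n`. -/
def IsTriangleComb (G : DGraph V) (teeth : Set V) : Prop :=
  ∃ (α : ℕ → ℕ) (q : ℕ → List V) (S : ℕ → DGraph V) (L R B : ℕ → V) (t : ℕ → V),
    Function.Injective α ∧
    (∀ j k, j ≠ k → (S j).verts ∩ (S k).verts = ∅) ∧
    (∀ n, (q n).Nodup) ∧
    (∀ m n, m ≠ n → ∀ v ∈ q m, v ∉ q n) ∧
    (∀ n, ∀ v ∈ q n, ∀ k, v ∉ (S k).verts) ∧
    (∀ k, L k ∈ (S k).verts ∧ R k ∈ (S k).verts ∧ B k ∈ (S k).verts) ∧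
    (∀ k, (¬ ∃ n, α n = k ∧ 1 ≤ k) → ∃ v, S k = single v) ∧
    (∀ n, 1 ≤ α n → ∃ a b c, a ≠ b ∧ b ≠ c ∧ a ≠ c ∧ S (α n) = triangle a b c) ∧
    (∀ n, 1 ≤ α n → q n ≠ [] →
      L (α n) ≠ R (α n) ∧ L (α n) ≠ B (α n) ∧ R (α n) ≠ B (α n)) ∧
    (∀ n, 1 ≤ α n → q n = [] →
      t n ∈ (S (α n)).verts ∧ L (α n) ≠ R (α n) ∧ t n ≠ L (α n) ∧ t n ≠ R (α n)) ∧
    (∀ n, q n ≠ [] → (q n).getLast? = some (t n)) ∧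
    (∀ n, α n = 0 → q n = [] → t n ∈ (S 0).verts) ∧
    G = iUnion S ∪ iUnion (fun k => linkBoth (R k) (L (k + 1))) ∪
        iUnion (fun n => branchGraph (B (α n)) (q n)) ∧
    teeth = Set.range t

/-- `G` is shaped by a comb, with set of teeth `teeth`. -/
def IsShapedByComb (G : DGraph V) (teeth : Set V) : Prop :=
  IsDComb G teeth ∨ IsTriangleComb G teeth

/-- The core of a chain of triangles: triangles `a i, b i, c i` together with
the edges `(a (i+1), a i)` and `(c i, c (i+1))`. -/
def chainCore (a b c : ℕ → V) : DGraph V :=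
  ⟨Set.range a ∪ Set.range b ∪ Set.range c,
   {e | ∃ i, e = (a i, b i) ∨ e = (b i, c i) ∨ e = (c i, a i) ∨
        e = (a (i + 1), a i) ∨ e = (c i, c (i + 1))}⟩

/-- `G` is a chain of triangles with set of teeth `teeth`. -/
def IsChainOfTriangles (G : DGraph V) (teeth : Set V) : Prop :=
  ∃ (a b c : ℕ → V) (q : ℕ → List V),
    (Function.Injective fun p : ℕ × Fin 3 => ![a, b, c] p.2 p.1) ∧
    (∀ i, (q i).Nodup ∧ (q i).head? = some (b i)) ∧
    (∀ i, ∀ v ∈ (q i).tail, ∀ j, v ≠ a j ∧ v ≠ b j ∧ v ≠ c j) ∧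
    (∀ i j, i ≠ j → ∀ v ∈ q i, v ∉ q j) ∧
    G = chainCore a b c ∪ iUnion (fun i => doubleOfList (q i)) ∧
    teeth = {v | ∃ i, (q i).getLast? = some v}

/-- `G` is a subdivided in-star with centre (root) `c` and all edges directed
towards `c`; it has infinitely many leaves and `teeth` is its set of leaves. -/
def IsSubdividedInStar (G : DGraph V) (teeth : Set V) : Prop :=
  ∃ (c : V) (q : ℕ → List V),
    (∀ n, (q n).Nodup ∧ (q n).getLast? = some c ∧ 2 ≤ (q n).length) ∧
    (∀ m n, m ≠ n → ∀ v, v ∈ q m → v ∈ q n → v = c) ∧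
    G = iUnion (fun n => ofList (q n)) ∧
    teeth = {v | ∃ n, (q n).head? = some v}

/-- `G` is a subdivided out-star. -/
def IsSubdividedOutStar (G : DGraph V) (teeth : Set V) : Prop :=
  IsSubdividedInStar G.reverse teeth

/-- `G = 𝒟(K_{1,∞})`. -/
def IsDInfiniteStar (G : DGraph V) : Prop :=
  ∃ (c : V) (g : ℕ → V), Function.Injective g ∧ (∀ n, g n ≠ c) ∧
    G = ⟨insert c (Set.range g), {e | ∃ n, e = (c, g n) ∨ e = (g n, c)}⟩

/-- `G = 𝒟(R)` for an undirected ray `R`. -/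
def IsDoubleRayGraph (G : DGraph V) : Prop :=
  ∃ f : ℕ → V, Function.Injective f ∧ G = doubleRay f

/-- `G` is a subdivision of a dominated directed ray (parallel edges being
collapsed): the ray `f`, its original vertices sitting at the positions
`α n ≥ 1`, and for each `n` a subdivided dominating edge `p n`. -/
def IsSubdivDominatedRay (G : DGraph V) : Prop :=
  (∃ (f : ℕ → V) (α : ℕ → ℕ) (p : ℕ → List V),
    Function.Injective f ∧ StrictMono α ∧ (∀ n, 1 ≤ α n) ∧
    (∀ n, (p n).Nodup ∧ (p n).head? = some (f (α n)) ∧ (p n).getLast? = some (f 0) ∧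
      2 ≤ (p n).length) ∧
    (∀ n, ∀ v ∈ internals (p n), v ∉ Set.range f) ∧
    (∀ m n, m ≠ n → ∀ v ∈ internals (p m), v ∉ p n) ∧
    G = outRay f ∪ iUnion (fun n => ofList (p n))) ∨
  (∃ (f : ℕ → V) (α : ℕ → ℕ) (p : ℕ → List V),
    Function.Injective f ∧ StrictMono α ∧ (∀ n, 1 ≤ α n) ∧
    (∀ n, (p n).Nodup ∧ (p n).head? = some (f 0) ∧ (p n).getLast? = some (f (α n)) ∧
      2 ≤ (p n).length) ∧
    (∀ n, ∀ v ∈ internals (p n), v ∉ Set.range f) ∧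
    (∀ m n, m ≠ n → ∀ v ∈ internals (p m), v ∉ p n) ∧
    G = inRay f ∪ iUnion (fun n => ofList (p n)))

section Laced

variable [DecidableEq V]

/-- The segment of the path `l` from `x` to `y` (inclusive). -/
def seg (l : List V) (x y : V) : List V :=
  (l.drop (l.idxOf x)).take (l.idxOf y + 1 - l.idxOf x)

/-- `x ≤ y` along the path `l`. -/
def leIn (l : List V) (x y : V) : Prop :=
  x ∈ l ∧ y ∈ l ∧ l.idxOf x ≤ l.idxOf y

/-- `x < y` along the path `l`. -/
def ltIn (l : List V) (x y : V) : Prop :=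
  x ∈ l ∧ y ∈ l ∧ l.idxOf x < l.idxOf y

/-- The directed paths `P` and `Q` are laced. -/
def Laced (P Q : List V) : Prop :=
  (∀ v ∈ P, v ∉ Q) ∨
  ∃ (ℓ : ℕ) (x y : ℕ → V), 1 ≤ ℓ ∧
    (∀ i, 1 ≤ i → i ≤ ℓ → leIn P (x i) (y i) ∧ leIn Q (x i) (y i)) ∧
    (∀ i, 1 ≤ i → i < ℓ → ltIn P (y i) (x (i + 1)) ∧ ltIn Q (y (i + 1)) (x i)) ∧
    (∀ i, 1 ≤ i → i ≤ ℓ → seg P (x i) (y i) = seg Q (x i) (y i)) ∧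
    (∀ i, 1 ≤ i → i < ℓ → ∀ v ∈ internals (seg Q (y (i + 1)) (x i)), v ∉ P) ∧
    (∀ v ∈ Q.take (Q.idxOf (x ℓ) + 1), v ∈ P → v = x ℓ) ∧
    (∀ v ∈ Q.drop (Q.idxOf (y 1)), v ∈ P → v = y 1)

end Laced

/-- The out-ray `f` and the in-ray `g` with common root are knit:
`x i = f (p i) = g (p' i)` and `y i = f (q i) = g (q' i)` are the shared
segments, in the orders required in the paper. -/
def Knit (f g : ℕ → V) : Prop :=
  f 0 = g 0 ∧
  ∃ p q p' q' : ℕ → ℕ,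
    (∀ i, 0 < p i ∧ p i ≤ q i ∧ q i < p (i + 1)) ∧
    (∀ i, 0 < q' i ∧ q' i ≤ p' i ∧ p' i < q' (i + 1)) ∧
    (∀ i, q i - p i = p' i - q' i) ∧
    (∀ i, ∀ k ≤ q i - p i, f (p i + k) = g (p' i - k)) ∧
    (∀ i, ∀ m, p' i < m → m < q' (i + 1) → g m ∉ Set.range f) ∧
    (∀ m, 0 < m → m < q' 0 → g m ∉ Set.range f)

section Contract

variable [DecidableEq V]

/-- The map identifying `v` with `u`. -/
def contractFun (u v : V) : V → V := fun x => if x = v then u else x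

/-- Contracting the edge `(u, v)` of `G` onto the vertex `u`. -/
def contractEdge (G : DGraph V) (u v : V) : DGraph V :=
  ⟨contractFun u v '' G.verts,
   {e | e ≠ (u, u) ∧ ∃ e' ∈ G.edges, e = (contractFun u v e'.1, contractFun u v e'.2)}⟩

end Contract

/-- The edge `(u, v)` of `G` is butterfly contractible. -/
def IsButterflyContractibleEdge (G : DGraph V) (u v : V) : Prop :=
  (u, v) ∈ G.edges ∧
  ((∀ w, (u, w) ∈ G.edges → w = v) ∨ (∀ w, (w, v) ∈ G.edges → w = u))

/-- `G` and `H` are isomorphic directed graphs. -/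
def Isom (G H : DGraph V) : Prop :=
  ∃ φ : V → V, Set.BijOn φ G.verts H.verts ∧
    ∀ u ∈ G.verts, ∀ v ∈ G.verts, ((u, v) ∈ G.edges ↔ (φ u, φ v) ∈ H.edges)

end DGraph

namespace DGraph

variable {V : Type u}

-- ===== auxiliary lemmas start here =====

lemma reverse_reverse (G : DGraph V) : G.reverse.reverse = G := rfl

lemma mem_zip_tail_iff {l : List V} {e : V × V} :
    e ∈ l.zip l.tail ↔ ∃ i, ∃ h : i + 1 < l.length, e = (l[i]'(by omega), l[i+1]'h) := by
  constructor
  · intro h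
    obtain ⟨i, hi, he⟩ := List.mem_iff_getElem.mp h
    have hlen : i + 1 < l.length := by
      simp only [List.length_zip, List.length_tail] at hi; omega
    refine ⟨i, hlen, ?_⟩
    rw [← he, List.getElem_zip, List.getElem_tail]
  · rintro ⟨i, h, rfl⟩
    have hi : i < (l.zip l.tail).length := by
      simp only [List.length_zip, List.length_tail]; omega
    have := List.getElem_mem hi
    rwa [List.getElem_zip, List.getElem_tail] at this

lemma IsPathFrom.reverse {G : DGraph V} {a b : V} {l : List V}
    (h : IsPathFrom G a b l) : IsPathFrom G.reverse b a l.reverse := by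
  obtain ⟨⟨hne, hnd, hverts, hedges⟩, hhead, hlast⟩ := h
  refine ⟨⟨by simpa using hne, by simpa using hnd, fun v hv => hverts v (by simpa using hv), ?_⟩,
    by rw [List.head?_reverse]; exact hlast, by rw [List.getLast?_reverse]; exact hhead⟩
  intro e he
  rw [mem_zip_tail_iff] at he
  obtain ⟨i, hi, rfl⟩ := he
  simp only [List.length_reverse] at hi
  have h1 : i < l.reverse.length := by simp; omega
  have h2 : i + 1 < l.reverse.length := by simp; omega
  rw [List.getElem_reverse, List.getElem_reverse]
  set j := l.length - 1 - (i + 1) with hj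
  have hj1 : l.length - 1 - i = j + 1 := by omega
  have hjlen : j + 1 < l.length := by omega
  have hmem : (l[j]'(by omega), l[j+1]'hjlen) ∈ G.edges := by
    apply hedges
    rw [mem_zip_tail_iff]; exact ⟨j, hjlen, rfl⟩
  simp only [← hj, hj1]
  exact hmem


lemma reaches_reverse {G : DGraph V} {a b : V} (h : Reaches G a b) :
    Reaches G.reverse b a := by
  obtain ⟨l, hl⟩ := h; exact ⟨l.reverse, hl.reverse⟩

lemma stronglyConnected_reverse {G : DGraph V} (h : StronglyConnected G) :
    StronglyConnected G.reverse :=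
  fun a ha b hb => reaches_reverse (h b hb a ha)

lemma subset_reverse {H G : DGraph V} (h : H ⊆ G) : H.reverse ⊆ G.reverse :=
  ⟨h.1, fun _ he => h.2 he⟩

/-- Auxiliary: dependent choice over ℕ. -/
lemma dep_choice {α : Type*} (a : α) (R : ℕ → α → α → Prop) (h : ∀ n x, ∃ y, R n x y) :
    ∃ g : ℕ → α, g 0 = a ∧ ∀ n, R n (g n) (g (n + 1)) := by
  choose f hf using h
  exact ⟨fun n => Nat.rec a f n, rfl, fun n => hf n _⟩

/-- Invariant for the greedy construction of the in-arborescence. -/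
def Inv (D : DGraph V) (r : V) (S : Set V) (p : V → V) : Prop :=
  r ∈ S ∧ S ⊆ D.verts ∧ (∀ v ∈ S, v ≠ r → p v ∈ S ∧ (v, p v) ∈ D.edges) ∧
  (∀ v ∈ S, ∃ k, p^[k] v = r)

lemma iter_in {S : Set V} {p : V → V} {r : V} (hcl : ∀ v ∈ S, v ≠ r → p v ∈ S)
    {v : V} (hv : v ∈ S) {k : ℕ} (hk : p^[k] v = r) (hmin : ∀ j < k, p^[j] v ≠ r) :
    ∀ j ≤ k, p^[j] v ∈ S := by
  intro j hj
  induction j with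
  | zero => exact hv
  | succ i ih =>
    rw [Function.iterate_succ_apply']
    exact hcl _ (ih (by omega)) (hmin i (by omega))

lemma iter_agree {S : Set V} {p q : V → V} {r : V} (hpq : ∀ v ∈ S, q v = p v)
    (hcl : ∀ v ∈ S, v ≠ r → p v ∈ S) {v : V} (hv : v ∈ S) (hk : ∃ k, p^[k] v = r) :
    ∃ k, q^[k] v = r := by
  classical
  set k := Nat.find hk with hkdef
  have hkr : p^[k] v = r := Nat.find_spec hk
  have hmin : ∀ j < k, p^[j] v ≠ r := fun j hj => Nat.find_min hk hj
  have hin := iter_in hcl hv hkr hmin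
  have hag : ∀ j ≤ k, q^[j] v = p^[j] v := by
    intro j hj
    induction j with
    | zero => rfl
    | succ i ih =>
      rw [Function.iterate_succ_apply', Function.iterate_succ_apply', ih (by omega)]
      exact hpq _ (hin i (by omega))
  exact ⟨k, by rw [hag k le_rfl]; exact hkr⟩

lemma reaches_of_iter (T : DGraph V) (P : V → V) (r : V)
    (hE : T.edges = {q | q.1 ∈ T.verts ∧ q.1 ≠ r ∧ q.2 = P q.1})
    (hcl : ∀ v ∈ T.verts, v ≠ r → P v ∈ T.verts)
    {v : V} (hv : v ∈ T.verts) (hex : ∃ k, P^[k] v = r) : Reaches T v r := by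
  classical
  set k := Nat.find hex with hkdef
  have hkr : P^[k] v = r := Nat.find_spec hex
  have hmin : ∀ j < k, P^[j] v ≠ r := fun j hj => Nat.find_min hex hj
  have hin : ∀ j ≤ k, P^[j] v ∈ T.verts := iter_in hcl hv hkr hmin
  set L : List V := (List.range (k + 1)).map (fun j => P^[j] v) with hL
  have hlen : L.length = k + 1 := by simp [hL]
  have hget : ∀ i (h : i < k + 1), L[i]'(by omega) = P^[i] v := by
    intro i h
    simp only [hL, List.getElem_map, List.getElem_range]
  refine ⟨L, ⟨?_, ?_, ?_, ?_⟩, ?_, ?_⟩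
  · intro h; rw [h] at hlen; simp at hlen
  · refine List.Nodup.map_on ?_ List.nodup_range
    intro i hi j hj hij
    simp only [List.mem_range] at hi hj
    by_contra hne
    rcases Nat.lt_or_ge i j with h | h
    · have h1 : P^[k - j + i] v = r := by
        have h2 : P^[k - j + j] v = r := by rw [Nat.sub_add_cancel (by omega)]; exact hkr
        rw [Function.iterate_add_apply] at h2 ⊢
        rw [hij]; exact h2
      exact hmin _ (by omega) h1
    · have hji : j < i := by omega
      have h1 : P^[k - i + j] v = r := by
        have h2 : P^[k - i + i] v = r := by rw [Nat.sub_add_cancel (by omega)]; exact hkr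
        rw [Function.iterate_add_apply] at h2 ⊢
        rw [← hij]; exact h2
      exact hmin _ (by omega) h1
  · intro x hx
    simp only [hL, List.mem_map, List.mem_range] at hx
    obtain ⟨j, hj, rfl⟩ := hx
    exact hin j (by omega)
  · intro e he
    rw [mem_zip_tail_iff] at he
    obtain ⟨i, hi, rfl⟩ := he
    rw [hlen] at hi
    rw [hget i (by omega), hget (i+1) (by omega)]
    rw [hE]
    exact ⟨hin i (by omega), hmin i (by omega), (Function.iterate_succ_apply' P i v)⟩
  · rw [List.head?_eq_getElem?, List.getElem?_eq_getElem (by omega : 0 < L.length),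
      hget 0 (by omega)]
    rfl
  · rw [List.getLast?_eq_getElem?, hlen]
    rw [List.getElem?_eq_getElem (by rw [hlen]; omega : k + 1 - 1 < L.length)]
    have h1 : k + 1 - 1 = k := by omega
    simp only [h1, hget k (by omega), hkr]


lemma step_lemma (D : DGraph V) (hD : StronglyConnected D) (r : V) (U : Set V) (u : V)
    (hu : u ∈ D.verts) (huU : u ∈ insert r U)
    (S : Set V) (p : V → V) (hInv : Inv D r S p) :
    ∃ S' : Set V, ∃ p' : V → V, Inv D r S' p' ∧ S ⊆ S' ∧ u ∈ S' ∧
      (∀ v ∈ S, p' v = p v) ∧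
      (∀ v ∈ S', v ∉ S → v ≠ r ∧ (v ∈ U ∨ ∃ w ∈ S', w ≠ r ∧ p' w = v)) := by
  classical
  obtain ⟨hrS, hSD, hcl, hwf⟩ := hInv
  by_cases hus : u ∈ S
  · exact ⟨S, p, ⟨hrS, hSD, hcl, hwf⟩, subset_rfl, hus, fun v _ => rfl,
      fun v hv hnv => absurd hv hnv⟩
  obtain ⟨l, ⟨hne, hnd, hverts, hedges⟩, hhead, hlast⟩ := hD u hu r (hSD hrS)
  set g : ℕ → V := fun i => l.getD i u with hgdef
  have hlen0 : 0 < l.length := List.length_pos_iff.mpr hne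
  have hg : ∀ i (h : i < l.length), g i = l[i]'h := fun i h => List.getD_eq_getElem l u h
  have hg0 : g 0 = u := by
    rw [hg 0 hlen0]
    rw [List.head?_eq_getElem?, List.getElem?_eq_getElem hlen0] at hhead
    exact Option.some.inj hhead
  have hgmem : ∀ i, i < l.length → g i ∈ l := fun i h => by
    rw [hg i h]; exact List.getElem_mem h
  have hginj : ∀ i j, i < l.length → j < l.length → g i = g j → i = j := by
    intro i j hi hj hij
    rw [hg i hi, hg j hj] at hij
    exact hnd.getElem_inj_iff.mp hij
  have hrl : r ∈ l := by
    rw [List.getLast?_eq_getElem?,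
      List.getElem?_eq_getElem (by omega : l.length - 1 < l.length)] at hlast
    rw [← Option.some.inj hlast]
    exact List.getElem_mem _
  have hexS : ∃ i, i < l.length ∧ g i ∈ S := by
    obtain ⟨i, hi, hil⟩ := List.mem_iff_getElem.mp hrl
    exact ⟨i, hi, by rw [hg i hi, hil]; exact hrS⟩
  set k := Nat.find hexS with hkdef
  obtain ⟨hkl, hkS⟩ : k < l.length ∧ g k ∈ S := Nat.find_spec hexS
  have hminS : ∀ i, i < k → i < l.length → g i ∉ S := by
    intro i hik h hms; exact Nat.find_min hexS hik ⟨h, hms⟩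
  have hk0 : 0 < k := by
    rcases Nat.eq_zero_or_pos k with h0 | h
    · exfalso; apply hus
      have h1 : g k ∈ S := hkS
      rw [h0, hg0] at h1
      exact h1
    · exact h
  have hur : u ≠ r := fun h => hus (h ▸ hrS)
  have huU2 : u ∈ U := by rcases huU with h | h; exact absurd h hur; exact h
  set N : Set V := {x | ∃ i, i < k ∧ g i = x} with hN
  set p' : V → V := fun v => if h : ∃ i, i < k ∧ g i = v then g (Nat.find h + 1) else p v
    with hp'
  have hNS : ∀ x ∈ N, x ∉ S := by
    rintro x ⟨i, hik, rfl⟩; exact hminS i hik (by omega)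
  have hp'S : ∀ v ∈ S, p' v = p v := by
    intro v hv
    simp only [hp']
    rw [dif_neg]
    intro h; exact hNS v h hv
  have hp'g : ∀ i, i < k → p' (g i) = g (i + 1) := by
    intro i hik
    have hh : ∃ j, j < k ∧ g j = g i := ⟨i, hik, rfl⟩
    simp only [hp']
    rw [dif_pos hh]
    obtain ⟨hjk, hji⟩ := Nat.find_spec hh
    have heq : Nat.find hh = i := hginj _ _ (by omega) (by omega) hji
    rw [heq]
  have hgedge : ∀ i, i + 1 < l.length → (g i, g (i + 1)) ∈ D.edges := by
    intro i hi
    rw [hg i (by omega), hg (i+1) hi]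
    apply hedges; rw [mem_zip_tail_iff]; exact ⟨i, hi, rfl⟩
  refine ⟨S ∪ N, p', ⟨Or.inl hrS, ?_, ?_, ?_⟩, Set.subset_union_left,
    Or.inr ⟨0, hk0, hg0⟩, hp'S, ?_⟩
  · rintro v (hv | ⟨i, hik, rfl⟩)
    · exact hSD hv
    · exact hverts _ (hgmem i (by omega))
  · rintro v (hv | ⟨i, hik, rfl⟩) hvr
    · rw [hp'S v hv]
      obtain ⟨h1, h2⟩ := hcl v hv hvr
      exact ⟨Or.inl h1, h2⟩
    · rw [hp'g i hik]
      constructor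
      · rcases Nat.lt_or_ge (i+1) k with h | h
        · exact Or.inr ⟨i+1, h, rfl⟩
        · have h1 : i + 1 = k := by omega
          rw [h1]; exact Or.inl hkS
      · exact hgedge i (by omega)
  · have hclS : ∀ v ∈ S, v ≠ r → p v ∈ S := fun v hv hvr => (hcl v hv hvr).1
    rintro v (hv | ⟨i, hik, rfl⟩)
    · exact iter_agree hp'S hclS hv (hwf v hv)
    · have hiter : ∀ j, i + j ≤ k → p'^[j] (g i) = g (i + j) := by
        intro j
        induction j with
        | zero => intro _; rfl
        | succ m ih =>
          intro h
          rw [Function.iterate_succ_apply', ih (by omega), hp'g (i + m) (by omega)]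
          congr 1
      obtain ⟨m, hm⟩ := iter_agree hp'S hclS hkS (hwf _ hkS)
      refine ⟨m + (k - i), ?_⟩
      rw [Function.iterate_add_apply, hiter (k - i) (by omega),
        show i + (k - i) = k from by omega]
      exact hm
  · rintro v (hv | ⟨i, hik, rfl⟩) hnv
    · exact absurd hv hnv
    · refine ⟨fun h => hnv (by rw [h]; exact hrS), ?_⟩
      rcases Nat.eq_zero_or_pos i with h0 | hi0
      · left; rw [h0, hg0]; exact huU2
      · right
        refine ⟨g (i-1), Or.inr ⟨i-1, by omega, rfl⟩,
          fun h => hminS (i-1) (by omega) (by omega) (by rw [h]; exact hrS), ?_⟩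
        rw [hp'g (i-1) (by omega)]
        congr 1
        omega


lemma exists_in_arb (D : DGraph V) (hD : StronglyConnected D) (U : Set V)
    (hUD : U ⊆ D.verts) (hU : U.Countable) (r : V) (hr : r ∈ D.verts) :
    ∃ T : DGraph V, T ⊆ D ∧ IsInArborescence T r ∧ U ⊆ T.verts ∧
      {v | IsLeafOfInArb T r v} ⊆ U := by
  classical
  obtain ⟨e, he⟩ := (hU.insert r).exists_eq_range ⟨r, Set.mem_insert r U⟩
  have heU : ∀ n, e n ∈ insert r U := fun n => he ▸ Set.mem_range_self n
  have heD : ∀ n, e n ∈ D.verts := by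
    intro n
    rcases heU n with h | h
    · rw [h]; exact hr
    · exact hUD h
  have hInv0 : Inv D r {r} id := by
    refine ⟨rfl, by simpa using hr, ?_, ?_⟩
    · rintro v rfl hvr; exact absurd rfl hvr
    · rintro v rfl; exact ⟨0, rfl⟩
  have hstep : ∀ n (x : {x : Set V × (V → V) // Inv D r x.1 x.2}),
      ∃ y : {x : Set V × (V → V) // Inv D r x.1 x.2},
        x.1.1 ⊆ y.1.1 ∧ e n ∈ y.1.1 ∧ (∀ v ∈ x.1.1, y.1.2 v = x.1.2 v) ∧
        (∀ v ∈ y.1.1, v ∉ x.1.1 → v ≠ r ∧ (v ∈ U ∨ ∃ w ∈ y.1.1, w ≠ r ∧ y.1.2 w = v)) := by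
    rintro n ⟨⟨S, p⟩, hInv⟩
    obtain ⟨S', p', h1, h2, h3, h4, h5⟩ :=
      step_lemma D hD r U (e n) (heD n) (heU n) S p hInv
    exact ⟨⟨(S', p'), h1⟩, h2, h3, h4, h5⟩
  obtain ⟨gs, hgs0, hgsR⟩ := dep_choice (⟨({r}, id), hInv0⟩ :
    {x : Set V × (V → V) // Inv D r x.1 x.2}) _ hstep
  set S : ℕ → Set V := fun n => (gs n).1.1 with hSdef
  set p : ℕ → V → V := fun n => (gs n).1.2 with hpdef
  have hS0 : S 0 = {r} := by rw [hSdef]; simp only; rw [hgs0]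
  have hInvn : ∀ n, Inv D r (S n) (p n) := fun n => (gs n).2
  have hmono : ∀ m n, m ≤ n → S m ⊆ S n := by
    intro m n h
    induction n with
    | zero => rw [Nat.le_zero.mp h]
    | succ j ih =>
      rcases Nat.lt_or_ge m (j+1) with h1 | h1
      · exact (ih (by omega)).trans (hgsR j).1
      · rw [show m = j + 1 from by omega]
  have hstab : ∀ m n, m ≤ n → ∀ v ∈ S m, p n v = p m v := by
    intro m n h
    induction n with
    | zero => rw [Nat.le_zero.mp h]; intro v _; rfl
    | succ j ih =>
      rcases Nat.lt_or_ge m (j+1) with h1 | h1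
      · intro v hv
        have h2 : p (j+1) v = p j v := (hgsR j).2.2.1 v (hmono m j (by omega) hv)
        exact h2.trans (ih (by omega) v hv)
      · rw [show m = j + 1 from by omega]; intro v _; rfl
  set SS : Set V := ⋃ n, S n with hSS
  set P : V → V := fun v => if h : ∃ n, v ∈ S n then p (Nat.find h) v else v with hP
  have hPn : ∀ n, ∀ v ∈ S n, P v = p n v := by
    intro n v hv
    have h : ∃ m, v ∈ S m := ⟨n, hv⟩
    simp only [hP]
    rw [dif_pos h]
    exact (hstab (Nat.find h) n (Nat.find_min' h hv) v (Nat.find_spec h)).symm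
  have hmemSS : ∀ v, v ∈ SS ↔ ∃ n, v ∈ S n := fun v => Set.mem_iUnion
  have hrSS : r ∈ SS := (hmemSS r).mpr ⟨0, by rw [hS0]; rfl⟩
  have hSSD : SS ⊆ D.verts := by
    intro v hv
    obtain ⟨n, hn⟩ := (hmemSS v).mp hv
    exact (hInvn n).2.1 hn
  have hclSS : ∀ v ∈ SS, v ≠ r → P v ∈ SS ∧ (v, P v) ∈ D.edges := by
    intro v hv hvr
    obtain ⟨n, hn⟩ := (hmemSS v).mp hv
    rw [hPn n v hn]
    obtain ⟨h1, h2⟩ := (hInvn n).2.2.1 v hn hvr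
    exact ⟨(hmemSS _).mpr ⟨n, h1⟩, h2⟩
  have hwfSS : ∀ v ∈ SS, ∃ k, P^[k] v = r := by
    intro v hv
    obtain ⟨n, hn⟩ := (hmemSS v).mp hv
    exact iter_agree (hPn n) (fun w hw hwr => ((hInvn n).2.2.1 w hw hwr).1) hn
      ((hInvn n).2.2.2 v hn)
  have hchild : ∀ v ∈ SS, v ≠ r → v ∉ U → ∃ w ∈ SS, w ≠ r ∧ P w = v := by
    intro v hv hvr hvU
    have h : ∃ n, v ∈ S n := (hmemSS v).mp hv
    have hspec := Nat.find_spec h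
    rcases hn0 : Nat.find h with _ | j
    · exfalso
      rw [hn0] at hspec
      rw [hS0] at hspec
      exact hvr hspec
    · have hvnot : v ∉ S j := fun hc => Nat.lt_irrefl j (by
        have := Nat.find_min' h hc
        omega)
      rw [hn0] at hspec
      obtain ⟨_, h2⟩ := (hgsR j).2.2.2 v hspec hvnot
      rcases h2 with h2 | ⟨w, hw1, hw2, hw3⟩
      · exact absurd h2 hvU
      · exact ⟨w, (hmemSS w).mpr ⟨j+1, hw1⟩, hw2, by rw [hPn (j+1) w hw1]; exact hw3⟩
  refine ⟨⟨SS, {q | q.1 ∈ SS ∧ q.1 ≠ r ∧ q.2 = P q.1}⟩, ⟨hSSD, ?_⟩, ?_, ?_, ?_⟩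
  · rintro ⟨a, b⟩ ⟨h1, h2, h3⟩
    have := (hclSS a h1 h2).2
    rw [show b = P a from h3]
    exact this
  · refine ⟨hrSS, ?_, ?_, ?_, ?_⟩
    · rintro ⟨a, b⟩ ⟨h1, h2, h3⟩
      exact ⟨h1, by rw [show b = P a from h3]; exact (hclSS a h1 h2).1⟩
    · rintro w ⟨_, h2, _⟩
      exact h2 rfl
    · intro v hv hvr
      exact ⟨P v, ⟨hv, hvr, rfl⟩, fun w hw => hw.2.2⟩
    · intro v hv
      exact reaches_of_iter _ P r rfl (fun w hw hwr => (hclSS w hw hwr).1) hv (hwfSS v hv)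
  · intro v hv
    have : v ∈ Set.range e := he ▸ Set.mem_insert_of_mem r hv
    obtain ⟨n, rfl⟩ := this
    exact (hmemSS _).mpr ⟨n + 1, (hgsR n).2.1⟩
  · rintro v ⟨hv, hvr, hleaf⟩
    by_contra hvU
    obtain ⟨w, hw1, hw2, hw3⟩ := hchild v hv hvr hvU
    exact hleaf w ⟨hw1, hw2, hw3.symm⟩

end DGraph

/-- Let `U` be a countable set of vertices of a strongly
connected directed graph `D`.  Then for every vertex `r` of `D` there exist an
in-arborescence and an out-arborescence in `D`, each rooted at `r`, that
contain `U` and whose leaves are contained in `U`. -/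
theorem spanning_arborescences {V : Type u} (D : DGraph V)
    (hD : D.StronglyConnected) (U : Set V) (hUD : U ⊆ D.verts)
    (hU : U.Countable) (r : V) (hr : r ∈ D.verts) :
    (∃ T : DGraph V, T ⊆ D ∧ DGraph.IsInArborescence T r ∧ U ⊆ T.verts ∧
      {v | DGraph.IsLeafOfInArb T r v} ⊆ U) ∧
    (∃ T : DGraph V, T ⊆ D ∧ DGraph.IsOutArborescence T r ∧ U ⊆ T.verts ∧
      {v | DGraph.IsLeafOfOutArb T r v} ⊆ U) := by
  constructor
  · exact DGraph.exists_in_arb D hD U hUD hU r hr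
  · obtain ⟨T, hsub, harb, hUsub, hleaf⟩ :=
      DGraph.exists_in_arb D.reverse (DGraph.stronglyConnected_reverse hD) U hUD hU r hr
    exact ⟨T.reverse, DGraph.subset_reverse hsub, harb, hUsub, hleaf⟩
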